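/- Consider T rounds with values v_t ∈ [0,1] and competing bids d_t, budget 0 < B ≤ T, and Û(λ) the greedy budget-constrained utility of shading multiplier λ. Fix K = T² and grid points λ_k = k/K for k = 0,…,K. Then max_{k} Û(λ_k) ≥ sup_{λ∈[0,1]} Û(λ) − (1/B + 2) ≥ sup_{λ∈[0,1]} Û(λ) − 3. -/

import Mathlib

open scoped Classical

/-- One round of the greedy budget-constrained bidder with shading multiplier `lam`:
state is (remaining budget, accumulated utility); the bid is `min (lam * v t)`
(remaining budget); the player wins iff her bid strictly exceeds `d t`, paying her
bid and gaining value `v t`. -/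
noncomputable def auctionStep (v d : ℕ → ℝ) (lam : ℝ) (s : ℝ × ℝ) (t : ℕ) : ℝ × ℝ :=
  if d t < min (lam * v t) s.1 then
    (s.1 - min (lam * v t) s.1, s.2 + (v t - min (lam * v t) s.1))
  else s

/-- State (remaining budget, utility) after the first `t` rounds, starting with budget `B`. -/
noncomputable def auctionState (v d : ℕ → ℝ) (B lam : ℝ) (t : ℕ) : ℝ × ℝ :=
  (List.range t).foldl (auctionStep v d lam) (B, 0)

/-- `Û(lam)`: total utility of the greedy budget-constrained bidder over `T` rounds. -/
noncomputable def Uhat (T : ℕ) (v d : ℕ → ℝ) (B lam : ℝ) : ℝ :=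
  (auctionState v d B lam T).2

section Aux

variable (v d : ℕ → ℝ) (B : ℝ)

lemma auctionState_succ (lam : ℝ) (t : ℕ) :
    auctionState v d B lam (t+1) = auctionStep v d lam (auctionState v d B lam t) t := by
  simp [auctionState, List.range_succ]

lemma auctionState_zero (lam : ℝ) : auctionState v d B lam 0 = (B, 0) := rfl



lemma budget_nonneg (lam : ℝ) (hB : 0 ≤ B) : ∀ t, 0 ≤ (auctionState v d B lam t).1 := by
  intro t
  induction t with
  | zero => exact hB
  | succ t ih =>
      rw [auctionState_succ, auctionStep]
      split_ifs with h
      · simp only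
        have := min_le_right (lam * v t) (auctionState v d B lam t).1
        linarith
      · exact ih

lemma budget_mono (lam : ℝ) (hv : ∀ t, v t ∈ Set.Icc (0:ℝ) 1) (hl : 0 ≤ lam) (hB : 0 ≤ B) :
    ∀ {s t : ℕ}, s ≤ t → (auctionState v d B lam t).1 ≤ (auctionState v d B lam s).1 := by
  intro s t hst
  induction t with
  | zero => simp_all
  | succ t ih =>
      rcases Nat.lt_succ_iff_lt_or_eq.mp (Nat.lt_succ_of_le hst) with h | h
      · have h1 : (auctionState v d B lam (t+1)).1 ≤ (auctionState v d B lam t).1 := by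
          rw [auctionState_succ, auctionStep]
          split_ifs with hw
          · simp only
            have h0 : 0 ≤ min (lam * v t) (auctionState v d B lam t).1 :=
              le_min (mul_nonneg hl (hv t).1) (budget_nonneg v d B lam hB t)
            linarith
          · exact le_refl _
        exact h1.trans (ih (Nat.lt_succ_iff.mp h))
      · subst h; exact le_refl _

lemma budget_le (lam : ℝ) (hv : ∀ t, v t ∈ Set.Icc (0:ℝ) 1) (hl : 0 ≤ lam) (hB : 0 ≤ B) (t : ℕ) :
    (auctionState v d B lam t).1 ≤ B :=
  budget_mono v d B lam hv hl hB (Nat.zero_le t)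

lemma budget_lb (lam : ℝ) (hv : ∀ t, v t ∈ Set.Icc (0:ℝ) 1) (hl : 0 ≤ lam) (t : ℕ) :
    B - lam * t ≤ (auctionState v d B lam t).1 := by
  induction t with
  | zero => simp [auctionState_zero]
  | succ t ih =>
      rw [auctionState_succ, auctionStep]
      have hpay : min (lam * v t) (auctionState v d B lam t).1 ≤ lam := by
        calc min (lam * v t) (auctionState v d B lam t).1 ≤ lam * v t := min_le_left _ _
        _ ≤ lam * 1 := mul_le_mul_of_nonneg_left (hv t).2 hl
        _ = lam := mul_one lam
      split_ifs with hw
      · simp only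
        push_cast
        linarith
      · push_cast
        linarith

lemma util_mono (lam : ℝ) (hv : ∀ t, v t ∈ Set.Icc (0:ℝ) 1) (hl : 0 ≤ lam) (hl1 : lam ≤ 1) :
    ∀ {s t : ℕ}, s ≤ t → (auctionState v d B lam s).2 ≤ (auctionState v d B lam t).2 := by
  intro s t hst
  induction t with
  | zero => simp_all
  | succ t ih =>
      rcases Nat.lt_succ_iff_lt_or_eq.mp (Nat.lt_succ_of_le hst) with h | h
      · have h1 : (auctionState v d B lam t).2 ≤ (auctionState v d B lam (t+1)).2 := by
          rw [auctionState_succ, auctionStep]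
          split_ifs with hw
          · simp only
            have h0 : min (lam * v t) (auctionState v d B lam t).1 ≤ v t := by
              calc min (lam * v t) (auctionState v d B lam t).1 ≤ lam * v t := min_le_left _ _
              _ ≤ 1 * v t := mul_le_mul_of_nonneg_right hl1 (hv t).1
              _ = v t := one_mul _
            linarith
          · exact le_refl _
        exact (ih (Nat.lt_succ_iff.mp h)).trans h1
      · subst h; exact le_refl _

lemma util_nonneg (lam : ℝ) (hv : ∀ t, v t ∈ Set.Icc (0:ℝ) 1) (hl : 0 ≤ lam) (hl1 : lam ≤ 1)
    (t : ℕ) : 0 ≤ (auctionState v d B lam t).2 :=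
  util_mono v d B lam hv hl hl1 (Nat.zero_le t)

lemma util_ub (lam : ℝ) (hv : ∀ t, v t ∈ Set.Icc (0:ℝ) 1) (hl : 0 ≤ lam) (hB : 0 ≤ B) (t : ℕ) :
    (auctionState v d B lam t).2 ≤ t := by
  induction t with
  | zero => simp [auctionState_zero]
  | succ t ih =>
      rw [auctionState_succ, auctionStep]
      have h0 : 0 ≤ min (lam * v t) (auctionState v d B lam t).1 :=
        le_min (mul_nonneg hl (hv t).1) (budget_nonneg v d B lam hB t)
      split_ifs with hw
      · simp only
        push_cast
        have := (hv t).2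
        linarith
      · push_cast
        linarith

/-- every win pays `p ≤ mu * v` and gains `v - p ≥ (1/mu - 1) p`, multiplicative form -/
lemma util_ge_spend (mu : ℝ) (t : ℕ) :
    (1 - mu) * (B - (auctionState v d B mu t).1) ≤ mu * (auctionState v d B mu t).2 := by
  induction t with
  | zero => simp [auctionState_zero]
  | succ t ih =>
      rw [auctionState_succ, auctionStep]
      split_ifs with hw
      · simp only
        have hp : min (mu * v t) (auctionState v d B mu t).1 ≤ mu * v t := min_le_left _ _
        nlinarith [hp]
      · exact ih

lemma util_le_spend (lam : ℝ) (hv : ∀ t, v t ∈ Set.Icc (0:ℝ) 1) (hd : ∀ t, 0 ≤ d t)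
    (hl : 0 < lam) (hl1 : lam ≤ 1) (hB : 0 ≤ B) (t : ℕ) :
    lam * (auctionState v d B lam t).2 ≤ (1 - lam) * (B - (auctionState v d B lam t).1) + lam := by
  have main : ∀ t : ℕ,
      lam * (auctionState v d B lam t).2 ≤ (1 - lam) * (B - (auctionState v d B lam t).1) ∨
      ((auctionState v d B lam t).1 = 0 ∧
        lam * (auctionState v d B lam t).2 ≤ (1 - lam) * (B - (auctionState v d B lam t).1) + lam) := by
    intro t
    induction t with
    | zero => left; simp [auctionState_zero]
    | succ t ih =>
        rw [auctionState_succ, auctionStep]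
        split_ifs with hw
        · -- a win
          have hbpos : 0 < (auctionState v d B lam t).1 :=
            lt_of_le_of_lt (hd t) (lt_of_lt_of_le hw (min_le_right _ _))
          rcases ih with ih | ih
          · rcases le_or_gt (lam * v t) (auctionState v d B lam t).1 with hc | hc
            · left
              simp only
              rw [min_eq_left hc]
              nlinarith [(hv t).1]
            · right
              have hmin : min (lam * v t) (auctionState v d B lam t).1
                  = (auctionState v d B lam t).1 := min_eq_right hc.le
              constructor
              · simp only [hmin]; ring
              · simp only [hmin]
                have hv1 := (hv t).2
                nlinarith [hbpos.le]
          · exfalso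
            rw [ih.1] at hw
            have : min (lam * v t) 0 ≤ 0 := min_le_right _ _
            have := hd t
            linarith
        · exact ih
  rcases main t with h | h
  · linarith
  · exact h.2


/-- Coupling: if the `mu`-run wins every round the `lam`-run wins (up to `n`), then its
utility is at most `(mu-lam)*n + 1` below the `lam`-run's. -/
lemma coupling (lam mu : ℝ) (hv : ∀ t, v t ∈ Set.Icc (0:ℝ) 1) (hd : ∀ t, 0 ≤ d t)
    (hl : 0 ≤ lam) (hlm : lam ≤ mu) (hm1 : mu ≤ 1) (hB : 0 ≤ B) (n : ℕ)
    (H : ∀ s < n, d s < min (lam * v s) (auctionState v d B lam s).1 →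
      d s < min (mu * v s) (auctionState v d B mu s).1) :
    (auctionState v d B lam n).2 ≤ (auctionState v d B mu n).2 + (mu - lam) * n +
      (if (auctionState v d B lam n).1 = 0 then 1 else 0) := by
  induction n with
  | zero =>
      simp [auctionState_zero]
      by_cases h : B = 0 <;> simp [h]
  | succ n ih =>
      have H' : ∀ s < n, d s < min (lam * v s) (auctionState v d B lam s).1 →
          d s < min (mu * v s) (auctionState v d B mu s).1 := fun s hs => H s (hs.trans n.lt_succ_self)
      have ih := ih H'
      have hmono : (auctionState v d B mu n).2 ≤ (auctionState v d B mu (n+1)).2 :=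
        util_mono v d B mu hv (hl.trans hlm) hm1 n.le_succ
      by_cases hw : d n < min (lam * v n) (auctionState v d B lam n).1
      · -- lam wins round n, hence mu wins it too
        have hwmu := H n n.lt_succ_self hw
        have hblpos : 0 < (auctionState v d B lam n).1 :=
          lt_of_le_of_lt (hd n) (lt_of_lt_of_le hw (min_le_right _ _))
        have hind : (if (auctionState v d B lam n).1 = 0 then (1:ℝ) else 0) = 0 := by
          rw [if_neg hblpos.ne']
        rw [hind, add_zero] at ih
        have hstepl := auctionState_succ v d B lam n
        have hstepm := auctionState_succ v d B mu n
        rw [auctionState_succ, auctionStep, if_pos hw]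
        rw [auctionState_succ, auctionStep, if_pos hwmu]
        have hpm : min (mu * v n) (auctionState v d B mu n).1 ≤ mu * v n := min_le_left _ _
        have hvn0 := (hv n).1
        have hvn1 := (hv n).2
        rcases le_or_gt (lam * v n) (auctionState v d B lam n).1 with hc | hc
        · -- full payment for lam
          have hmin : min (lam * v n) (auctionState v d B lam n).1 = lam * v n := min_eq_left hc
          simp only [hmin]
          have hite : (0:ℝ) ≤ (if ((auctionState v d B lam n).1 - lam * v n) = 0 then (1:ℝ) else 0) := by
            split_ifs <;> norm_num
          push_cast
          nlinarith [hpm]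
        · -- truncated payment for lam: budget hits zero
          have hmin : min (lam * v n) (auctionState v d B lam n).1
              = (auctionState v d B lam n).1 := min_eq_right hc.le
          simp only [hmin]
          have hz : (auctionState v d B lam n).1 - (auctionState v d B lam n).1 = 0 := sub_self _
          rw [hz, if_pos rfl]
          have hpm' : mu * v n ≤ 1 := by nlinarith
          push_cast
          nlinarith [hpm]
      · -- lam does not win round n
        have hstepl : auctionState v d B lam (n+1) = auctionState v d B lam n := by
          rw [auctionState_succ, auctionStep, if_neg hw]
        rw [hstepl]
        have hite : (auctionState v d B mu n).2 + (mu - lam) * n ≤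
            (auctionState v d B mu (n+1)).2 + (mu - lam) * (n+1) := by
          push_cast; nlinarith
        split_ifs at ih ⊢ with h
        · push_cast at ih ⊢; linarith
        · push_cast at ih ⊢; linarith

lemma finishG (B lam mu s Ul Um : ℝ) (hB0 : 0 < B) (hl0 : 0 < lam) (hm0 : 0 < mu)
    (hm1 : mu ≤ 1) (hl1 : lam ≤ 1) (hs : s ≤ B)
    (hUl : lam * Ul ≤ (1 - lam) * s + lam) (hUm : (1 - mu) * (B - mu) ≤ mu * Um)
    (hG : B ^ 2 * (mu - lam) ≤ lam * mu * (mu * B + 1)) : Ul ≤ Um + (1 / B + 2) := by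
  have hpos : 0 < lam * mu * B := by positivity
  have key : (lam * mu * B) * Ul ≤ (lam * mu * B) * (Um + (1 / B + 2)) := by
    have expand : (lam * mu * B) * (Um + (1 / B + 2)) =
        (lam * mu * B) * Um + lam * mu + 2 * (lam * mu * B) := by
      field_simp
      ring
    rw [expand]
    have e1 : (mu * B) * (lam * Ul) ≤ (mu * B) * ((1 - lam) * B + lam) := by
      apply mul_le_mul_of_nonneg_left _ (by positivity)
      have : (1 - lam) * s ≤ (1 - lam) * B := mul_le_mul_of_nonneg_left hs (by linarith)
      linarith
    have e2 : (lam * B) * ((1 - mu) * (B - mu)) ≤ (lam * B) * (mu * Um) :=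
      mul_le_mul_of_nonneg_left hUm (by positivity)
    nlinarith [e1, e2, hG]
  exact le_of_mul_le_mul_left key hpos

set_option maxHeartbeats 1000000 in
lemma arith (t B lam mu s Ul Um : ℝ) (ht : 3 ≤ t) (hB1 : 1 ≤ B) (hBt : B ≤ t)
    (hl0 : 0 < lam) (hlm : lam ≤ mu) (hm1 : mu ≤ 1) (heps : mu ≤ lam + 1 / t ^ 2)
    (hs0 : 0 ≤ s) (hsB : s ≤ B) (hsT : s ≤ lam * t) (hBmu : B ≤ mu * t)
    (hUl : lam * Ul ≤ (1 - lam) * s + lam) (hUm : (1 - mu) * (B - mu) ≤ mu * Um) :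
    Ul ≤ Um + (1 / B + 2) := by
  have hm0 : 0 < mu := hl0.trans_le hlm
  have hB0 : 0 < B := by linarith
  have ht0 : 0 < t := by linarith
  have ht2 : (0:ℝ) < t ^ 2 := by positivity
  have hl1 : lam ≤ 1 := hlm.trans hm1
  have heps' : (mu - lam) * t ^ 2 ≤ 1 := by
    have h := mul_le_mul_of_nonneg_right heps ht2.le
    have : (lam + 1 / t ^ 2) * t ^ 2 = lam * t ^ 2 + 1 := by field_simp
    nlinarith [h]
  rcases le_or_gt B (lam * t) with hcase | hcase
  · -- case (i)
    have hG : B ^ 2 * (mu - lam) ≤ lam * mu * (mu * B + 1) := by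
      have h1 : B ^ 2 ≤ lam ^ 2 * t ^ 2 := by nlinarith
      have h3 : B ^ 2 * (mu - lam) ≤ lam ^ 2 := by
        have h2 : (B ^ 2 * (mu - lam)) * t ^ 2 ≤ lam ^ 2 * t ^ 2 := by nlinarith [sq_nonneg B]
        exact le_of_mul_le_mul_right h2 ht2
      nlinarith [mul_pos hl0 hm0, mul_nonneg (mul_pos hl0 hm0).le (mul_nonneg hm0.le hB0.le)]
    exact finishG B lam mu s Ul Um hB0 hl0 hm0 hm1 hl1 hsB hUl hUm hG
  · rcases le_or_gt B (t - 1) with hBt1 | hBt1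
    · -- case (ii)
      set mu0 : ℝ := B / t + 1 / t ^ 2 with hmu0def
      have hmu00 : 0 < mu0 := by positivity
      have hlamlt : lam < B / t := (lt_div_iff₀ ht0).mpr hcase
      have hmu_le : mu ≤ mu0 := by
        have h1 : 1 / t ^ 2 ≤ 1 / t ^ 2 := le_refl _
        calc mu ≤ lam + 1 / t ^ 2 := heps
        _ ≤ B / t + 1 / t ^ 2 := by linarith
      have hD3 : mu0 ^ 2 ≤ B / t := by
        rw [hmu0def]
        rw [div_add_div _ _ (by positivity : (t:ℝ) ≠ 0) (by positivity : (t^2:ℝ) ≠ 0)]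
        rw [div_pow, div_le_div_iff₀ (by positivity) ht0]
        have k1 : 0 ≤ B * t ^ 2 * (t - B - 1) :=
          mul_nonneg (mul_nonneg hB0.le (sq_nonneg t)) (by linarith)
        have k2 : 0 ≤ B * t * (t - 2) - 1 := by
          have w0 : (3:ℝ) ≤ t * (t - 2) := by nlinarith [mul_nonneg (by linarith : (0:ℝ) ≤ t - 3) (by linarith : (0:ℝ) ≤ t + 1)]
          have w1 : 1 * (t * (t - 2)) ≤ B * (t * (t - 2)) :=
            mul_le_mul_of_nonneg_right hB1 (by linarith)
          nlinarith [w0, w1]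
        have m1 : (B * t + 1) ^ 2 ≤ B * t ^ 3 := by nlinarith
        nlinarith [mul_le_mul_of_nonneg_left m1 (by positivity : (0:ℝ) ≤ t ^ 3)]
      -- step0 : Ul ≤ (1-lam)*t + 1
      have step0 : Ul ≤ (1 - lam) * t + 1 := by
        have h : lam * Ul ≤ lam * ((1 - lam) * t + 1) := by
          have h2 : (1 - lam) * s ≤ (1 - lam) * (lam * t) := by
            apply mul_le_mul_of_nonneg_left hsT (by linarith)
          calc lam * Ul ≤ (1 - lam) * s + lam := hUl
          _ ≤ (1 - lam) * (lam * t) + lam := by linarith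
          _ = lam * ((1 - lam) * t + 1) := by ring
        exact le_of_mul_le_mul_left h hl0
      -- step1
      have step1 : (1 - lam) * t ≤ t - mu * t + 1 / t := by
        have e : (1 / t ^ 2) * t = 1 / t := by field_simp
        nlinarith [heps]
      -- step2 : (mu0 - mu) * t ≤ B / mu - B / mu0
      have step2 : (mu0 - mu) * t ≤ B / mu - B / mu0 := by
        have h1 : B / mu - B / mu0 = B * (mu0 - mu) / (mu * mu0) := by
          field_simp
        rw [h1, le_div_iff₀ (by positivity)]
        have hmm : mu * mu0 * t ≤ B := by
          have : mu * mu0 ≤ mu0 ^ 2 := by nlinarith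
          have h2 : mu * mu0 * t ≤ mu0 ^ 2 * t := by nlinarith
          have h3 : mu0 ^ 2 * t ≤ B := by
            rw [le_div_iff₀ ht0] at hD3
            · linarith
          linarith
        nlinarith [hmm, sub_nonneg.mpr hmu_le]
      -- step3 : t - B / mu0 ≤ 1 / B
      have step3 : t - B / mu0 ≤ 1 / B := by
        have h : t - B / mu0 = t / (B * t + 1) := by
          rw [hmu0def]
          field_simp
          ring
        rw [h, div_le_div_iff₀ (by positivity) hB0]
        nlinarith
      -- e3 : mu0 * t = B + 1/t
      have e3 : mu0 * t = B + 1 / t := by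
        rw [hmu0def]
        field_simp
      -- hUm' : B/mu - 1 - B + mu ≤ Um
      have hUm' : B / mu - 1 - B + mu ≤ Um := by
        have h1 : (1 - mu) * (B - mu) / mu ≤ Um := by
          rw [div_le_iff₀ hm0]
          linarith [hUm]
        have h2 : (1 - mu) * (B - mu) / mu = B / mu - 1 - B + mu := by
          field_simp
          ring
        linarith [h1, h2 ▸ h1]
      linarith [step0, step1, step2, step3, hUm', e3, hm0.le]
    · -- case (iii)
      have hG : B ^ 2 * (mu - lam) ≤ lam * mu * (mu * B + 1) := by
        have f2 : B * t - 1 ≤ lam * t ^ 2 := by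
          have h1 : B * t ≤ (mu * t) * t := mul_le_mul_of_nonneg_right hBmu ht0.le
          nlinarith [heps', h1]
        have f3 : B ^ 2 + t ≤ (mu * B + 1) * t := by
          have h1 : B * B ≤ B * (mu * t) := mul_le_mul_of_nonneg_left hBmu hB0.le
          nlinarith [h1]
        have hlampos2 : 0 ≤ B * t - 1 := by nlinarith
        have g1 : (B * t - 1) * (B * ((B ^ 2 + t))) ≤
            (lam * t ^ 2) * ((mu * t) * ((mu * B + 1) * t)) := by
          have p1 : (0:ℝ) ≤ B * (B ^ 2 + t) := by positivity
          have p2 : B * (B ^ 2 + t) ≤ (mu * t) * ((mu * B + 1) * t) := by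
            calc B * (B ^ 2 + t) ≤ (mu * t) * (B ^ 2 + t) :=
                mul_le_mul_of_nonneg_right hBmu (by positivity)
            _ ≤ (mu * t) * ((mu * B + 1) * t) := mul_le_mul_of_nonneg_left f3 (by positivity)
          have p3 : (0:ℝ) ≤ lam * t ^ 2 := by positivity
          calc (B * t - 1) * (B * (B ^ 2 + t)) ≤ (lam * t ^ 2) * (B * (B ^ 2 + t)) :=
              mul_le_mul_of_nonneg_right f2 p1
          _ ≤ (lam * t ^ 2) * ((mu * t) * ((mu * B + 1) * t)) :=
              mul_le_mul_of_nonneg_left p2 p3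
        have g2 : B ^ 2 * t ^ 2 ≤ (B * t - 1) * (B * (B ^ 2 + t)) := by
          have hB2 : 2 ≤ B := by linarith
          have k : B ^ 2 ≤ t * (B ^ 3 - 1) := by
            have w1 : 0 ≤ B ^ 3 - 1 := by nlinarith [hB2]
            have w2 : 3 * (B ^ 3 - 1) ≤ t * (B ^ 3 - 1) := mul_le_mul_of_nonneg_right ht w1
            have hB3 : 2 * B ^ 2 ≤ B ^ 3 := by nlinarith [sq_nonneg B, hB2]
            have hB4 : 4 ≤ B ^ 2 := by nlinarith [hB2]
            linarith
          nlinarith [k, hB0.le, mul_le_mul_of_nonneg_left k hB0.le]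
        have g3 : (B ^ 2 * (mu - lam)) * t ^ 4 ≤ (lam * mu * (mu * B + 1)) * t ^ 4 := by
          have l1 : (B ^ 2 * (mu - lam)) * t ^ 4 = (B ^ 2 * ((mu - lam) * t ^ 2)) * t ^ 2 := by ring
          have l2 : (lam * t ^ 2) * ((mu * t) * ((mu * B + 1) * t)) =
              (lam * mu * (mu * B + 1)) * t ^ 4 := by ring
          have u1 : (B ^ 2 * (mu - lam)) * t ^ 4 ≤ B ^ 2 * t ^ 2 := by
            nlinarith [heps', sq_nonneg (B * t)]
          linarith [u1, g2, g1, l2 ▸ g1]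
        exact le_of_mul_le_mul_right g3 (by positivity)
      exact finishG B lam mu s Ul Um hB0 hl0 hm0 hm1 hl1 hsB hUl hUm hG

lemma key (T : ℕ) (hT : 0 < T) (hv : ∀ t, v t ∈ Set.Icc (0:ℝ) 1) (hd : ∀ t, 0 ≤ d t)
    (hB : 1 ≤ B) (hBT : B ≤ T) (lam : ℝ) (h0 : 0 ≤ lam) (h1 : lam ≤ 1) :
    ∃ k ∈ Finset.range (T ^ 2 + 1),
      Uhat T v d B lam ≤ Uhat T v d B ((k : ℝ) / (T : ℝ) ^ 2) + (1 / B + 2) := by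
  have hB0 : (0:ℝ) < B := by linarith
  have hT1 : (1:ℝ) ≤ (T:ℝ) := by exact_mod_cast hT
  have hK : (0:ℝ) < (T:ℝ) ^ 2 := by positivity
  set k := ⌈lam * (T:ℝ) ^ 2⌉₊ with hkdef
  have hkK : k ≤ T ^ 2 := by
    apply Nat.ceil_le.mpr
    push_cast
    nlinarith
  refine ⟨k, Finset.mem_range.mpr (Nat.lt_succ_of_le hkK), ?_⟩
  set mu := (k : ℝ) / (T : ℝ) ^ 2 with hmudef
  have hlm : lam ≤ mu := by
    rw [hmudef, le_div_iff₀ hK]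
    exact Nat.le_ceil _
  have hm1 : mu ≤ 1 := by
    rw [hmudef, div_le_one hK]
    calc (k:ℝ) ≤ ((T ^ 2 : ℕ) : ℝ) := by exact_mod_cast hkK
    _ = (T:ℝ) ^ 2 := by push_cast; ring
  have hm0 : 0 ≤ mu := h0.trans hlm
  have heps : mu ≤ lam + 1 / (T:ℝ) ^ 2 := by
    have h := (Nat.ceil_lt_add_one (mul_nonneg h0 hK.le)).le
    rw [hmudef, div_le_iff₀ hK]
    have : (lam + 1 / (T:ℝ) ^ 2) * (T:ℝ) ^ 2 = lam * (T:ℝ) ^ 2 + 1 := by field_simp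
    rw [this]
    exact h
  rcases lt_or_ge (T:ℝ) 3 with hT3 | hT3
  · -- trivial case T ≤ 2
    have hub := util_ub v d B lam hv h0 (by linarith) T
    have hnn := util_nonneg v d B mu hv hm0 hm1 T
    have h1B : 0 < 1 / B := by positivity
    simp only [Uhat]
    have : (T:ℝ) ≤ 2 := by
      have h2 : T < 3 := by exact_mod_cast hT3
      have h3 : T ≤ 2 := by omega
      exact_mod_cast h3
    linarith
  · by_cases H : ∀ s < T, d s < min (lam * v s) (auctionState v d B lam s).1 →
        d s < min (mu * v s) (auctionState v d B mu s).1
    · -- coupling case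
      have hc := coupling v d B lam mu hv hd h0 hlm hm1 hB0.le T H
      have hee : (mu - lam) * (T:ℝ) ≤ 1 := by
        have h2 : (mu - lam) * (T:ℝ) ≤ (1 / (T:ℝ) ^ 2) * T := by
          apply mul_le_mul_of_nonneg_right (by linarith) (by positivity)
        have h3 : (1 / (T:ℝ) ^ 2) * T = 1 / T := by field_simp
        have h4 : 1 / (T:ℝ) ≤ 1 := by rw [div_le_one (by linarith)]; linarith
        linarith
      have hind : (if (auctionState v d B lam T).1 = 0 then (1:ℝ) else 0) ≤ 1 := by
        split_ifs <;> norm_num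
      have h1B : 0 < 1 / B := by positivity
      simp only [Uhat]
      linarith
    · push_neg at H
      obtain ⟨τ, hτT, hwin, hnw⟩ := H
      have hdlt1 : d τ < lam * v τ := hwin.trans_le (min_le_left _ _)
      have hlam_pos : 0 < lam := by
        rcases lt_or_ge 0 lam with h | h
        · exact h
        · exfalso
          have : lam * v τ ≤ 0 := mul_nonpos_of_nonpos_of_nonneg h (hv τ).1
          linarith [hd τ]
      have hmu_pos : 0 < mu := hlam_pos.trans_le hlm
      have hlmv : lam * v τ ≤ mu * v τ := mul_le_mul_of_nonneg_right hlm (hv τ).1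
      have hbmu : (auctionState v d B mu τ).1 ≤ d τ := by
        rcases min_le_iff.mp hnw with h | h
        · exfalso; linarith
        · exact h
      have hbmu_lam : (auctionState v d B mu τ).1 ≤ lam := by
        have : lam * v τ ≤ lam * 1 := mul_le_mul_of_nonneg_left (hv τ).2 h0
        linarith
      have hbmu_mu : (auctionState v d B mu τ).1 ≤ mu := hbmu_lam.trans hlm
      -- B ≤ mu * T
      have hBmu : B ≤ mu * (T:ℝ) := by
        have hlb := budget_lb v d B mu hv hm0 τ
        have hτ1 : (τ:ℝ) + 1 ≤ (T:ℝ) := by exact_mod_cast hτT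
        nlinarith [hlb, hbmu_mu, hm0]
      -- bounds on lam-spend
      have hsl0 : (auctionState v d B lam T).1 ≤ B := budget_le v d B lam hv h0 hB0.le T
      have hsl1 : 0 ≤ (auctionState v d B lam T).1 := budget_nonneg v d B lam hB0.le T
      have hsl2 : B - lam * (T:ℝ) ≤ (auctionState v d B lam T).1 := budget_lb v d B lam hv h0 T
      have hUl := util_le_spend v d B lam hv hd hlam_pos h1 hB0.le T
      have hUmfull := util_ge_spend v d B mu T
      have hbmuT : (auctionState v d B mu T).1 ≤ mu := by
        have := budget_mono v d B mu hv hm0 hB0.le (le_of_lt hτT)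
        linarith
      have hUm : (1 - mu) * (B - mu) ≤ mu * (auctionState v d B mu T).2 := by
        have h2 : (1 - mu) * (B - mu) ≤ (1 - mu) * (B - (auctionState v d B mu T).1) :=
          mul_le_mul_of_nonneg_left (by linarith) (by linarith)
        linarith
      exact arith (T:ℝ) B lam mu (B - (auctionState v d B lam T).1) _ _ hT3 hB hBT
        hlam_pos hlm hm1 heps (by linarith) (by linarith) (by linarith) hBmu hUl hUm

end Aux

theorem stmt_6 (T : ℕ) (hT : 0 < T) (v d : ℕ → ℝ) (B : ℝ)
    (hv : ∀ t, v t ∈ Set.Icc (0 : ℝ) 1) (hd : ∀ t, 0 ≤ d t)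
    (hB : 1 ≤ B) (hBT : B ≤ T) :
    (Finset.range (T ^ 2 + 1)).sup' (by simp) (fun k => Uhat T v d B (k / (T ^ 2 : ℝ))) ≥
      (⨆ lam : Set.Icc (0 : ℝ) 1, Uhat T v d B lam) - (1 / B + 2) ∧
    (⨆ lam : Set.Icc (0 : ℝ) 1, Uhat T v d B lam) - (1 / B + 2) ≥
      (⨆ lam : Set.Icc (0 : ℝ) 1, Uhat T v d B lam) - 3 := by
  have hB0 : (0:ℝ) < B := by linarith
  have hsup : (⨆ lam : Set.Icc (0 : ℝ) 1, Uhat T v d B lam) ≤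
      (Finset.range (T ^ 2 + 1)).sup' (by simp) (fun k => Uhat T v d B (k / (T ^ 2 : ℝ)))
        + (1 / B + 2) := by
    haveI : Nonempty (Set.Icc (0:ℝ) 1) := ⟨⟨0, by constructor <;> norm_num⟩⟩
    apply ciSup_le
    rintro ⟨lam, hlam⟩
    rw [Set.mem_Icc] at hlam
    obtain ⟨k, hk, hle⟩ := key v d B T hT hv hd hB hBT lam hlam.1 hlam.2
    have h2 := Finset.le_sup' (fun k : ℕ => Uhat T v d B (k / (T ^ 2 : ℝ))) hk
    simp only at h2 ⊢
    linarith
  constructor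
  · rw [ge_iff_le, sub_le_iff_le_add]
    linarith
  · have h1B : 1 / B ≤ 1 := by rw [div_le_one hB0]; linarith
    linarith
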